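/- Let G be a closed germ and let s be any point on the out-sphere S_o. Then s ∈ G if and only if the polar point s* lies on the boundary of the polar G*. -/

import Mathlib

noncomputable section

/- Ambient space: ℝ^(d²) with the standard inner product. -/
abbrev V (d : ℕ) := EuclideanSpace ℝ (Fin (d^2))

/-- The standard inner product ⟨u, v⟩ = ∑ i, u i * v i. -/
def ip {d : ℕ} (u v : V d) : ℝ := inner ℝ u v

/-- The barycenter c, with all entries equal to 1/d². -/
def cpt (d : ℕ) : V d := WithLp.toLp 2 (fun _ => 1/(d^2:ℝ))

/-- The hyperplane H = {u : ⟨u, c⟩ = 1/d²} of vectors whose entries sum to 1. -/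
def Hs (d : ℕ) : Set (V d) := {u | ip u (cpt d) = 1/(d^2:ℝ)}

/-- The polar A* = {u ∈ H : ⟨u, v⟩ ≥ 1/(d(d+1)) for all v ∈ A}. -/
def polar (d : ℕ) (A : Set (V d)) : Set (V d) :=
  {u | u ∈ Hs d ∧ ∀ v ∈ A, 1/((d:ℝ)*((d:ℝ)+1)) ≤ ip u v}

/-- cc(A): the closed convex hull of A. -/
def cc (d : ℕ) (A : Set (V d)) : Set (V d) := closure (convexHull ℝ A)

/-- The probability simplex Δ = {u ∈ H : u i ≥ 0 for all i}. -/
def probSimplex (d : ℕ) : Set (V d) := {u | u ∈ Hs d ∧ ∀ i, 0 ≤ u i}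

/-- The basis distributions e_k, with e_k(i) = (δ_{ki} + 1/d)/(d+1). -/
def basisDist (d : ℕ) (k : Fin (d^2)) : V d :=
  WithLp.toLp 2 (fun i => ((if k = i then (1:ℝ) else 0) + 1/(d:ℝ)) / ((d:ℝ)+1))

/-- The basis simplex Δ_e: the convex hull of the basis distributions. -/
def basisSimplex (d : ℕ) : Set (V d) := convexHull ℝ (Set.range (basisDist d))

/-- The out-ball B_o = {u ∈ H : ⟨u, u⟩ ≤ 2/(d(d+1))}. -/
def outBall (d : ℕ) : Set (V d) := {u | u ∈ Hs d ∧ ip u u ≤ 2/((d:ℝ)*((d:ℝ)+1))}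

/-- The out-sphere S_o = {u ∈ H : ⟨u, u⟩ = 2/(d(d+1))}. -/
def outSphere (d : ℕ) : Set (V d) := {u | u ∈ Hs d ∧ ip u u = 2/((d:ℝ)*((d:ℝ)+1))}

/-- The in-ball B_i = {u ∈ H : ‖u − c‖² ≤ 1/(d²(d²−1))}. -/
def inBall (d : ℕ) : Set (V d) :=
  {u | u ∈ Hs d ∧ ‖u - cpt d‖^2 ≤ 1/((d:ℝ)^2*((d:ℝ)^2-1))}

/-- The in-sphere S_i = {u ∈ H : ‖u − c‖² = 1/(d²(d²−1))}. -/
def inSphere (d : ℕ) : Set (V d) :=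
  {u | u ∈ Hs d ∧ ‖u - cpt d‖^2 = 1/((d:ℝ)^2*((d:ℝ)^2-1))}

/-- The mid-ball B_m = {u ∈ H : ‖u − c‖² ≤ 1/(d²(d+1))}. -/
def midBall (d : ℕ) : Set (V d) :=
  {u | u ∈ Hs d ∧ ‖u - cpt d‖^2 ≤ 1/((d:ℝ)^2*((d:ℝ)+1))}

/-- A germ: a subset of Δ whose pairwise inner products satisfy the
fundamental inequalities 1/(d(d+1)) ≤ ⟨p, s⟩ ≤ 2/(d(d+1)). -/
def IsGerm (d : ℕ) (G : Set (V d)) : Prop :=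
  G ⊆ probSimplex d ∧
  ∀ p ∈ G, ∀ s ∈ G, 1/((d:ℝ)*((d:ℝ)+1)) ≤ ip p s ∧ ip p s ≤ 2/((d:ℝ)*((d:ℝ)+1))

/-- A qplex: a self-polar subset of Δ ∩ B_o. -/
def IsQplex (d : ℕ) (Q : Set (V d)) : Prop :=
  Q ⊆ probSimplex d ∩ outBall d ∧ Q = polar d Q

/-- Action of a d²×d² matrix on a vector: (R u)(i) = ∑ j, R i j * u j. -/
def mvec (d : ℕ) (R : Matrix (Fin (d^2)) (Fin (d^2)) ℝ) (u : V d) : V d :=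
  WithLp.toLp 2 (fun i => ∑ j, R i j * u j)

/-- The out-sphere radius r_o, with r_o² = (d²−1)/(d²(d+1)²). -/
def rO (d : ℕ) : ℝ := Real.sqrt (((d:ℝ)^2-1)/((d:ℝ)^2*((d:ℝ)+1)^2))

/-- The in-sphere radius r_i, with r_i² = 1/(d²(d²−1)). -/
def rI (d : ℕ) : ℝ := Real.sqrt (1/((d:ℝ)^2*((d:ℝ)^2-1)))

/-- The polar point s* = c − (r_o r_i/‖s−c‖²)(s − c). -/
def polarPoint (d : ℕ) (s : V d) : V d :=
  cpt d - ((rO d * rI d)/‖s - cpt d‖^2) • (s - cpt d)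

/-- The boundary of a subset of H, relative to the hyperplane H. -/
def relBoundary (d : ℕ) (S : Set (V d)) : Set (V d) :=
  closure S ∩ closure (Hs d \ S)

-- ================= auxiliary lemmas =================

lemma ip_comm {d : ℕ} (u v : V d) : ip u v = ip v u := by
  rw [ip, ip, real_inner_comm]

lemma ip_sum {d : ℕ} (u v : V d) : ip u v = ∑ i, u i * v i := by
  simp [ip, PiLp.inner_apply, RCLike.inner_apply, mul_comm]

lemma ip_add_left {d : ℕ} (u v w : V d) : ip (u + v) w = ip u w + ip v w := by
  simp [ip, inner_add_left]

lemma ip_sub_left {d : ℕ} (u v w : V d) : ip (u - v) w = ip u w - ip v w := by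
  simp [ip, inner_sub_left]

lemma ip_sub_right {d : ℕ} (u v w : V d) : ip u (v - w) = ip u v - ip u w := by
  simp [ip, inner_sub_right]

lemma ip_smul_left {d : ℕ} (r : ℝ) (u w : V d) : ip (r • u) w = r * ip u w := by
  simp [ip, inner_smul_left]

lemma norm_sub_sq' {d : ℕ} (u v : V d) : ‖u - v‖^2 = ip u u - 2 * ip u v + ip v v := by
  rw [@norm_sub_sq_real]
  rw [ip, ip, ip, real_inner_self_eq_norm_sq, real_inner_self_eq_norm_sq]

lemma ip_cpt {d : ℕ} (u : V d) : ip u (cpt d) = (∑ i, u i) / (d^2:ℝ) := by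
  rw [ip_sum]
  simp only [cpt, Finset.sum_div, PiLp.toLp_apply]
  congr 1; ext i; ring

lemma cpt_cpt {d : ℕ} (hd : 2 ≤ d) : ip (cpt d) (cpt d) = 1/(d^2:ℝ) := by
  have hd0 : (d:ℝ) ≠ 0 := Nat.cast_ne_zero.mpr (by omega)
  rw [ip_cpt]
  simp only [cpt, PiLp.toLp_apply, Finset.sum_const, Finset.card_univ, Fintype.card_fin, nsmul_eq_mul]
  push_cast
  field_simp

lemma cpt_mem_Hs {d : ℕ} (hd : 2 ≤ d) : cpt d ∈ Hs d := cpt_cpt hd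

lemma sum_eq_one {d : ℕ} (hd : 2 ≤ d) {u : V d} (hu : u ∈ Hs d) : ∑ i, u i = 1 := by
  have hd0 : ((d:ℝ)^2) ≠ 0 := by
    have : (d:ℝ) ≠ 0 := Nat.cast_ne_zero.mpr (by omega)
    positivity
  have := hu
  rw [Hs, Set.mem_setOf_eq, ip_cpt] at this
  field_simp at this
  linarith

-- norm of s - c for s in Hs
lemma norm_sub_cpt {d : ℕ} (hd : 2 ≤ d) {u : V d} (hu : u ∈ Hs d) :
    ‖u - cpt d‖^2 = ip u u - 1/(d^2:ℝ) := by
  have h1 : ip u (cpt d) = 1/(d^2:ℝ) := hu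
  rw [norm_sub_sq', h1, cpt_cpt hd]; ring

-- key real-number facts
lemma rOrI {d : ℕ} (hd : 2 ≤ d) : rO d * rI d = 1/((d:ℝ)^2*((d:ℝ)+1)) := by
  have hd2 : (2:ℝ) ≤ (d:ℝ) := by exact_mod_cast hd
  have h1 : (0:ℝ) < (d:ℝ) := by linarith
  have h2 : (0:ℝ) < (d:ℝ)+1 := by linarith
  have h3 : (0:ℝ) < (d:ℝ)^2-1 := by nlinarith
  rw [rO, rI, ← Real.sqrt_mul (by positivity)]
  rw [show ((d:ℝ)^2-1)/((d:ℝ)^2*((d:ℝ)+1)^2) * (1/((d:ℝ)^2*((d:ℝ)^2-1)))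
      = (1/((d:ℝ)^2*((d:ℝ)+1)))^2 by field_simp]
  exact Real.sqrt_sq (by positivity)

lemma norm_outSphere {d : ℕ} (hd : 2 ≤ d) {s : V d} (hs : s ∈ outSphere d) :
    ‖s - cpt d‖^2 = ((d:ℝ)^2-1)/((d:ℝ)^2*((d:ℝ)+1)^2) := by
  have hd2 : (2:ℝ) ≤ (d:ℝ) := by exact_mod_cast hd
  have h1 : (0:ℝ) < (d:ℝ) := by linarith
  have h2 : (0:ℝ) < (d:ℝ)+1 := by linarith
  rw [norm_sub_cpt hd hs.1, hs.2]
  field_simp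
  ring

lemma polarPoint_eq {d : ℕ} (hd : 2 ≤ d) {s : V d} (hs : s ∈ outSphere d) :
    polarPoint d s = cpt d - ((d:ℝ)-1)⁻¹ • (s - cpt d) := by
  have hd2 : (2:ℝ) ≤ (d:ℝ) := by exact_mod_cast hd
  have h1 : (0:ℝ) < (d:ℝ) := by linarith
  have h2 : (0:ℝ) < (d:ℝ)+1 := by linarith
  have h3 : (0:ℝ) < (d:ℝ)^2-1 := by nlinarith
  have h4 : (0:ℝ) < (d:ℝ)-1 := by linarith
  rw [polarPoint, rOrI hd, norm_outSphere hd hs]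
  congr 1
  rw [show (1/((d:ℝ)^2*((d:ℝ)+1))) / (((d:ℝ)^2-1)/((d:ℝ)^2*((d:ℝ)+1)^2)) = ((d:ℝ)-1)⁻¹ by
    field_simp; nlinarith]

-- the key linear computation
lemma key {d : ℕ} (hd : 2 ≤ d) {s : V d} (hs : s ∈ outSphere d) {v : V d} (hv : v ∈ Hs d) :
    ip (polarPoint d s) v - 1/((d:ℝ)*((d:ℝ)+1))
      = ((d:ℝ)-1)⁻¹ * (2/((d:ℝ)*((d:ℝ)+1)) - ip s v) := by
  have hd2 : (2:ℝ) ≤ (d:ℝ) := by exact_mod_cast hd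
  have h1 : (0:ℝ) < (d:ℝ)      := by linarith
  have h2 : (0:ℝ) < (d:ℝ)+1    := by linarith
  have h4 : (0:ℝ) < (d:ℝ)-1    := by linarith
  have hcv : ip (cpt d) v = 1/(d^2:ℝ) := by rw [ip_comm]; exact hv
  rw [polarPoint_eq hd hs, ip_sub_left, ip_smul_left, ip_sub_left, hcv]
  field_simp
  ring

lemma polarPoint_mem_Hs {d : ℕ} (hd : 2 ≤ d) {s : V d} (hs : s ∈ outSphere d) :
    polarPoint d s ∈ Hs d := by
  rw [Hs, Set.mem_setOf_eq, polarPoint_eq hd hs, ip_sub_left, ip_smul_left, ip_sub_left,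
    cpt_cpt hd, hs.1]
  ring

-- strict version of key inequality direction
lemma key_iff {d : ℕ} (hd : 2 ≤ d) {s : V d} (hs : s ∈ outSphere d) {v : V d} (hv : v ∈ Hs d) :
    (1/((d:ℝ)*((d:ℝ)+1)) ≤ ip (polarPoint d s) v ↔ ip s v ≤ 2/((d:ℝ)*((d:ℝ)+1))) := by
  have hd2 : (2:ℝ) ≤ (d:ℝ) := by exact_mod_cast hd
  have h4 : (0:ℝ) < ((d:ℝ)-1)⁻¹ := by rw [inv_pos]; linarith
  have := key hd hs hv
  constructor
  · intro h
    nlinarith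
  · intro h
    nlinarith

-- v in Δ has norm ≤ 1
lemma simplex_norm_le {d : ℕ} (hd : 2 ≤ d) {v : V d} (hv : v ∈ probSimplex d) : ‖v‖ ≤ 1 := by
  have hsum : ∑ i, v i = 1 := sum_eq_one hd hv.1
  have hle1 : ∀ i, v i ≤ 1 := by
    intro i
    calc v i ≤ ∑ j, v j := Finset.single_le_sum (fun j _ => hv.2 j) (Finset.mem_univ i)
    _ = 1 := hsum
  have h2 : ‖v‖^2 ≤ 1 := by
    have : ‖v‖^2 = ∑ i, v i * v i := by
      rw [← real_inner_self_eq_norm_sq]; exact ip_sum v v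
    rw [this]
    calc ∑ i, v i * v i ≤ ∑ i, v i := by
          apply Finset.sum_le_sum
          intro i _
          nlinarith [hv.2 i, hle1 i]
    _ = 1 := hsum
  nlinarith [norm_nonneg v]

lemma Hs_closed {d : ℕ} : IsClosed (Hs d) := by
  have : Hs d = (fun u : V d => ip u (cpt d)) ⁻¹' {1/(d^2:ℝ)} := rfl
  rw [this]
  exact IsClosed.preimage (Continuous.inner continuous_id continuous_const) isClosed_singleton

lemma polar_closed {d : ℕ} (G : Set (V d)) : IsClosed (polar d G) := by
  have : polar d G = Hs d ∩ ⋂ v ∈ G, {u : V d | 1/((d:ℝ)*((d:ℝ)+1)) ≤ ip u v} := by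
    ext u; simp [polar, Set.mem_iInter]
  rw [this]
  refine Hs_closed.inter (isClosed_biInter fun v _ => ?_)
  exact isClosed_le continuous_const (Continuous.inner continuous_id continuous_const)

-- rigidity: if v ∈ G (germ) and ip s v = 2/(d(d+1)), s on out-sphere, then v = s
lemma rigidity {d : ℕ} (hd : 2 ≤ d) {G : Set (V d)} (hG : IsGerm d G)
    {s : V d} (hs : s ∈ outSphere d) {v : V d} (hv : v ∈ G)
    (heq : ip s v = 2/((d:ℝ)*((d:ℝ)+1))) : v = s := by
  have hvH : v ∈ Hs d := (hG.1 hv).1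
  have hvv : ip v v ≤ 2/((d:ℝ)*((d:ℝ)+1)) := (hG.2 v hv v hv).2
  have hnv : ‖v - cpt d‖^2 ≤ 2/((d:ℝ)*((d:ℝ)+1)) - 1/(d^2:ℝ) := by
    rw [norm_sub_cpt hd hvH]; linarith
  have hns : ‖s - cpt d‖^2 = 2/((d:ℝ)*((d:ℝ)+1)) - 1/(d^2:ℝ) := by
    rw [norm_sub_cpt hd hs.1, hs.2]
  have hipsc : ip (s - cpt d) (v - cpt d) = 2/((d:ℝ)*((d:ℝ)+1)) - 1/(d^2:ℝ) := by
    rw [ip_sub_left, ip_sub_right, ip_sub_right]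
    have h1 : ip s (cpt d) = 1/(d^2:ℝ) := hs.1
    have h2 : ip (cpt d) v = 1/(d^2:ℝ) := by rw [ip_comm]; exact hvH
    rw [h1, h2, cpt_cpt hd, heq]; ring
  have hzero : ‖(s - cpt d) - (v - cpt d)‖^2 ≤ 0 := by
    rw [norm_sub_sq']
    have e1 : ip (s - cpt d) (s - cpt d) = ‖s - cpt d‖^2 := by
      rw [ip, real_inner_self_eq_norm_sq]
    have e2 : ip (v - cpt d) (v - cpt d) = ‖v - cpt d‖^2 := by
      rw [ip, real_inner_self_eq_norm_sq]
    rw [e1, e2, hipsc, hns]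
    linarith
  have hn : ‖(s - cpt d) - (v - cpt d)‖ = 0 := by
    nlinarith [norm_nonneg ((s - cpt d) - (v - cpt d))]
  have hz : s - cpt d - (v - cpt d) = 0 := norm_eq_zero.mp hn
  have hsv : s - v = 0 := by rw [show s - v = s - cpt d - (v - cpt d) by abel, hz]
  exact (sub_eq_zero.mp hsv).symm

-- ================= main theorem =================

lemma ip_self_eq_norm {d : ℕ} (u : V d) : ip u u = ‖u‖^2 := by
  rw [ip, real_inner_self_eq_norm_sq]

/-- for a closed germ G and s on the out-sphere, s ∈ G iff the
polar point s* lies on the (relative) boundary of G*. -/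
theorem statement8 (d : ℕ) (hd : 2 ≤ d) (G : Set (V d)) (hG : IsGerm d G)
    (hclosed : IsClosed G) (s : V d) (hs : s ∈ outSphere d) :
    s ∈ G ↔ polarPoint d s ∈ relBoundary d (polar d G) := by
  have hd2 : (2:ℝ) ≤ (d:ℝ) := by exact_mod_cast hd
  have hD1 : (0:ℝ) < (d:ℝ) := by linarith
  have hD2 : (0:ℝ) < (d:ℝ)+1 := by linarith
  have hD3 : (0:ℝ) < (d:ℝ)^2-1 := by nlinarith
  have ht : (0:ℝ) < ((d:ℝ)-1)⁻¹ := by rw [inv_pos]; linarith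
  set t : ℝ := ((d:ℝ)-1)⁻¹ with htdef
  have hr2 : ‖s - cpt d‖^2 = ((d:ℝ)^2-1)/((d:ℝ)^2*((d:ℝ)+1)^2) := norm_outSphere hd hs
  have hrpos : (0:ℝ) < ‖s - cpt d‖ := by
    have : (0:ℝ) < ‖s - cpt d‖^2 := by rw [hr2]; positivity
    nlinarith [norm_nonneg (s - cpt d)]
  have hpH : polarPoint d s ∈ Hs d := polarPoint_mem_Hs hd hs
  -- ip s* s = 1/(d(d+1))
  have hsH : s ∈ Hs d := hs.1
  have hpss : ip (polarPoint d s) s = 1/((d:ℝ)*((d:ℝ)+1)) := by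
    have := key hd hs hsH
    rw [ip_comm s s] at this
    rw [hs.2, sub_self, mul_zero] at this
    linarith
  constructor
  · -- forward
    intro hsG
    constructor
    · -- s* ∈ closure (polar G)
      apply subset_closure
      refine ⟨hpH, fun v hv => ?_⟩
      exact (key_iff hd hs (hG.1 hv).1).2 (hG.2 s hsG v hv).2
    · -- s* ∈ closure (Hs \ polar G)
      rw [Metric.mem_closure_iff]
      intro ε hε
      set δ : ℝ := ε/(2*‖s - cpt d‖) with hδdef
      have hδ : 0 < δ := by positivity
      refine ⟨polarPoint d s - δ • (s - cpt d), ⟨?_, ?_⟩, ?_⟩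
      · -- in Hs
        rw [Hs, Set.mem_setOf_eq, ip_sub_left, ip_smul_left, ip_sub_left, hpH,
          hs.1, cpt_cpt hd]
        ring
      · -- not in polar G
        intro hmem
        have := hmem.2 s hsG
        rw [ip_sub_left, ip_smul_left, hpss] at this
        have hval : ip (s - cpt d) s = ‖s - cpt d‖^2 := by
          rw [norm_sub_cpt hd hs.1, ip_sub_left]
          have : ip (cpt d) s = 1/(d^2:ℝ) := by rw [ip_comm]; exact hs.1
          rw [this]
        rw [hval] at this
        have hpos : 0 < δ * ‖s - cpt d‖^2 := mul_pos hδ (pow_pos hrpos 2)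
        linarith
      · -- distance
        rw [dist_eq_norm]
        have : polarPoint d s - (polarPoint d s - δ • (s - cpt d)) = δ • (s - cpt d) := by abel
        rw [this, norm_smul, Real.norm_eq_abs, abs_of_pos hδ]
        rw [hδdef]
        rw [div_mul_eq_mul_div]
        rw [div_lt_iff₀ (by positivity)]
        nlinarith
  · -- backward, contrapositive
    intro hbd
    by_contra hsG
    -- all germ inner products with s are strictly below 2/(d(d+1)), or some above
    by_cases hcase : ∃ v ∈ G, 2/((d:ℝ)*((d:ℝ)+1)) < ip s v
    · obtain ⟨v, hvG, hlt⟩ := hcase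
      have hnp : polarPoint d s ∉ polar d G := by
        intro hp
        have := hp.2 v hvG
        have := (key_iff hd hs (hG.1 hvG).1).1 this
        linarith
      have : polarPoint d s ∈ closure (polar d G) := hbd.1
      rw [(polar_closed G).closure_eq] at this
      exact hnp this
    · push_neg at hcase
      -- strict inequalities by rigidity
      have hstrict : ∀ v ∈ G, ip s v < 2/((d:ℝ)*((d:ℝ)+1)) := by
        intro v hv
        rcases lt_or_eq_of_le (hcase v hv) with h | h
        · exact h
        · exact absurd (rigidity hd hG hs hv h ▸ hv) hsG
      rcases Set.eq_empty_or_nonempty G with hGe | hGne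
      · -- G empty : Hs \ polar G = ∅
        have hempty : Hs d \ polar d G = ∅ := by
          ext u
          simp [hGe, polar, Set.mem_diff]
        have := hbd.2
        rw [hempty, closure_empty] at this
        exact this
      · -- G nonempty: s* in relative interior
        have hGsub : G ⊆ Metric.closedBall (0 : V d) 1 := by
          intro v hv
          rw [Metric.mem_closedBall, dist_zero_right]
          exact simplex_norm_le hd (hG.1 hv)
        have hGcpt : IsCompact G :=
          Metric.isCompact_of_isClosed_isBounded hclosed
            (Metric.isBounded_closedBall.subset hGsub)
        have hcont : Continuous (fun v : V d => ip (polarPoint d s) v) :=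
          Continuous.inner continuous_const continuous_id
        obtain ⟨v₀, hv₀G, hmin⟩ := hGcpt.exists_isMinOn hGne hcont.continuousOn
        set m : ℝ := ip (polarPoint d s) v₀ with hmdef
        have hm : 1/((d:ℝ)*((d:ℝ)+1)) < m := by
          have hk := key hd hs (hG.1 hv₀G).1
          have := hstrict v₀ hv₀G
          nlinarith
        set ε : ℝ := m - 1/((d:ℝ)*((d:ℝ)+1)) with hεdef
        have hε : 0 < ε := by rw [hεdef]; exact sub_pos.mpr hm
        have hball : ∀ u : V d, dist (polarPoint d s) u < ε → u ∈ Hs d → u ∈ polar d G := by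
          intro u hdist huH
          refine ⟨huH, fun v hv => ?_⟩
          have h1 : m ≤ ip (polarPoint d s) v := hmin hv
          have h2 : |ip (u - polarPoint d s) v| ≤ ‖u - polarPoint d s‖ * ‖v‖ :=
            abs_real_inner_le_norm _ _
          have h3 : ‖v‖ ≤ 1 := simplex_norm_le hd (hG.1 hv)
          have h4 : ‖u - polarPoint d s‖ < ε := by
            rw [dist_comm, dist_eq_norm] at hdist; exact hdist
          have h5 : ip u v = ip (polarPoint d s) v + ip (u - polarPoint d s) v := by
            rw [ip_sub_left]; ring
          have h6 : ‖u - polarPoint d s‖ * ‖v‖ ≤ ε := by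
            nlinarith [norm_nonneg (u - polarPoint d s), norm_nonneg v]
          have h7 : -ε ≤ ip (u - polarPoint d s) v := by
            have := abs_le.mp h2
            linarith
          rw [h5]
          rw [hεdef] at h7
          linarith
        have := hbd.2
        rw [Metric.mem_closure_iff] at this
        obtain ⟨b, hb, hbd2⟩ := this ε hε
        exact hb.2 (hball b hbd2 hb.1)
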